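/- Let n > k be positive integers and c = 2^{3n}k^2 + n^2. For any prime power q, all but at most c·q^{n-1} vectors α ∈ F_q^n have distinct coordinates and define an [n,k]-RS code that is ((2/3)(1 - k/n), 2) list-decodable. -/

import Mathlib

/-- The `[n,k]`-RS code defined by the evaluation vector `α`. -/
def RScode (F : Type*) [Field F] (n k : ℕ) (α : Fin n → F) : Set (Fin n → F) :=
  {c | ∃ f : Polynomial F, f.degree < (k : WithBot ℕ) ∧ c = fun i => f.eval (α i)}

/-- `C` is `(r, L)` list-decodable: every Hamming ball of radius `r·n` contains at most `L`
codewords of `C`. -/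
def listDecodable {n : ℕ} {Q : Type*} [DecidableEq Q] (C : Set (Fin n → Q)) (r : ℝ)
    (L : ℕ) : Prop :=
  ∀ y : Fin n → Q, Nat.card {c : Fin n → Q // c ∈ C ∧ (hammingDist y c : ℝ) ≤ r * n} ≤ L


section Helpers



section SZ
open MvPolynomial Finset
variable {F : Type*} [Field F] [Fintype F] [DecidableEq F]

theorem sz_mul (n : ℕ) (p : MvPolynomial (Fin n) F) (hp : p ≠ 0) :
    (Finset.univ.filter (fun α : Fin n → F => MvPolynomial.eval α p = 0)).card
      * Fintype.card F ≤ p.totalDegree * Fintype.card F ^ n := by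
  induction n with
  | zero =>
      obtain ⟨a, rfl⟩ := MvPolynomial.C_surjective (Fin 0) p
      have ha : a ≠ 0 := fun h => hp (by rw [h, map_zero])
      have : (Finset.univ.filter (fun α : Fin 0 → F => MvPolynomial.eval α (C a) = 0)) = ∅ := by
        rw [Finset.filter_eq_empty_iff]
        intro α _
        simpa using ha
      rw [this]
      simp
  | succ n ih =>
      classical
      set q := Fintype.card F with hq
      set P := finSuccEquiv F n p with hPdef
      have hPne : P ≠ 0 := by
        intro h0
        exact hp ((MvPolynomial.finSuccEquiv F n).injective (by rw [← hPdef, h0, map_zero]))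
      set d := P.natDegree with hd
      set l := P.coeff d with hl
      have hlne : l ≠ 0 := by
        have := Polynomial.leadingCoeff_ne_zero.mpr hPne
        rwa [Polynomial.leadingCoeff] at this
      have hdeg : l.totalDegree + d ≤ p.totalDegree :=
        totalDegree_coeff_finSuccEquiv_add_le p d hlne
      set T₁ : Finset (F × (Fin n → F)) :=
        univ ×ˢ (univ.filter (fun s => eval s l = 0)) with hT₁
      set T₂ : Finset (F × (Fin n → F)) :=
        (univ.filter (fun s : Fin n → F => ¬ eval s l = 0)).biUnion
          (fun s => (univ.filter (fun y : F => eval (Fin.cons y s) p = 0)).image (fun y => (y, s)))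
        with hT₂
      have hcard : (Finset.univ.filter (fun α : Fin (n+1) → F => MvPolynomial.eval α p = 0)).card
          = (univ.filter (fun ys : F × (Fin n → F) => eval (Fin.cons ys.1 ys.2) p = 0)).card := by
        apply Finset.card_equiv (Fin.consEquiv (fun _ : Fin (n+1) => F)).symm
        intro α
        simp only [mem_filter, mem_univ, true_and]
        have : (Fin.cons ((Fin.consEquiv (fun _ : Fin (n+1) => F)).symm α).1
            ((Fin.consEquiv (fun _ : Fin (n+1) => F)).symm α).2 : Fin (n+1) → F) = α :=
          (Fin.consEquiv (fun _ : Fin (n+1) => F)).apply_symm_apply α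
        rw [this]
      have hsub : (univ.filter (fun ys : F × (Fin n → F) => eval (Fin.cons ys.1 ys.2) p = 0))
          ⊆ T₁ ∪ T₂ := by
        intro ys hys
        simp only [mem_filter, mem_univ, true_and] at hys
        by_cases h : eval ys.2 l = 0
        · apply Finset.mem_union_left
          simp [hT₁, h]
        · apply Finset.mem_union_right
          simp only [hT₂, Finset.mem_biUnion, mem_filter, mem_univ, true_and, Finset.mem_image]
          exact ⟨ys.2, h, ys.1, by simpa using hys, rfl⟩
      have hcard₁ : T₁.card = q * (univ.filter (fun s : Fin n → F => eval s l = 0)).card := by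
        simp [hT₁, Finset.card_product, hq]
      have hcard₂ : T₂.card ≤ q ^ n * d := by
        have hper : ∀ s ∈ (univ.filter (fun s : Fin n → F => ¬ eval s l = 0)),
            ((univ.filter (fun y : F => eval (Fin.cons y s) p = 0)).image
              (fun y => (y, s))).card ≤ d := by
          intro s hs
          refine le_trans (Finset.card_image_le) ?_
          simp only [mem_filter, mem_univ, true_and] at hs
          set Ps := P.map (eval s) with hPs
          have hPsne : Ps ≠ 0 := fun h0 => hs (by
            have := congrArg (fun r => Polynomial.coeff r d) h0
            simpa [hPs] using this)
          have hsubr : (univ.filter (fun y : F => eval (Fin.cons y s) p = 0)) ⊆ Ps.roots.toFinset := by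
            intro y hy
            simp only [mem_filter, mem_univ, true_and] at hy
            rw [eval_eq_eval_mv_eval'] at hy
            simp only [Multiset.mem_toFinset, Polynomial.mem_roots hPsne]
            exact hy
          refine le_trans (Finset.card_le_card hsubr) ?_
          refine le_trans (Multiset.toFinset_card_le _) ?_
          refine le_trans (Polynomial.card_roots' _) ?_
          exact Polynomial.natDegree_map_le
        calc T₂.card ≤ ∑ s ∈ (univ.filter (fun s : Fin n → F => ¬ eval s l = 0)),
              ((univ.filter (fun y : F => eval (Fin.cons y s) p = 0)).image
                (fun y => (y, s))).card := Finset.card_biUnion_le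
          _ ≤ ∑ _s ∈ (univ.filter (fun s : Fin n → F => ¬ eval s l = 0)), d :=
              Finset.sum_le_sum hper
          _ = (univ.filter (fun s : Fin n → F => ¬ eval s l = 0)).card * d := by
              rw [Finset.sum_const, smul_eq_mul]
          _ ≤ q ^ n * d := by
              apply Nat.mul_le_mul_right d
              refine le_trans (Finset.card_le_univ _) ?_
              simp [hq, Fintype.card_fun]
      have hZl := ih l hlne
      -- assemble
      rw [hcard]
      calc (univ.filter (fun ys : F × (Fin n → F) => eval (Fin.cons ys.1 ys.2) p = 0)).card * q
          ≤ (T₁ ∪ T₂).card * q := Nat.mul_le_mul_right q (Finset.card_le_card hsub)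
        _ ≤ (T₁.card + T₂.card) * q := Nat.mul_le_mul_right q (Finset.card_union_le _ _)
        _ ≤ (q * (univ.filter (fun s : Fin n → F => eval s l = 0)).card + q ^ n * d) * q := by
            apply Nat.mul_le_mul_right q
            omega
        _ ≤ p.totalDegree * q ^ (n+1) := by
            have h1 : q * (univ.filter (fun s : Fin n → F => eval s l = 0)).card * q
                ≤ l.totalDegree * q ^ (n+1) := by
              calc q * (univ.filter (fun s : Fin n → F => eval s l = 0)).card * q
                  = q * ((univ.filter (fun s : Fin n → F => eval s l = 0)).card * q) := by ring
                _ ≤ q * (l.totalDegree * q ^ n) := Nat.mul_le_mul_left q hZl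
                _ = l.totalDegree * q ^ (n+1) := by ring
            have h2 : q ^ n * d * q = d * q ^ (n+1) := by ring
            have h3 : l.totalDegree * q ^ (n+1) + d * q ^ (n+1) ≤ p.totalDegree * q ^ (n+1) := by
              rw [← Nat.add_mul]
              exact Nat.mul_le_mul_right _ hdeg
            calc (q * (univ.filter (fun s : Fin n → F => eval s l = 0)).card + q ^ n * d) * q
                = q * (univ.filter (fun s : Fin n → F => eval s l = 0)).card * q + q ^ n * d * q := by
                  ring
              _ ≤ l.totalDegree * q ^ (n+1) + d * q ^ (n+1) := by rw [h2]; exact Nat.add_le_add_right h1 _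
              _ ≤ p.totalDegree * q ^ (n+1) := h3


theorem sz_card {n : ℕ} (hn : 1 ≤ n) (p : MvPolynomial (Fin n) F) (hp : p ≠ 0) :
    (Finset.univ.filter (fun α : Fin n → F => MvPolynomial.eval α p = 0)).card
      ≤ p.totalDegree * Fintype.card F ^ (n - 1) := by
  have hq : 0 < Fintype.card F := Fintype.card_pos
  have h := sz_mul n p hp
  have hn' : n - 1 + 1 = n := Nat.succ_pred_eq_of_pos hn
  have h2 : p.totalDegree * Fintype.card F ^ n
      = p.totalDegree * Fintype.card F ^ (n - 1) * Fintype.card F := by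
    rw [mul_assoc, ← pow_succ, hn']
  rw [h2] at h
  exact Nat.le_of_mul_le_mul_right h hq
end SZ

section VDM


open MvPolynomial Finset Polynomial

variable {K : Type*} [Field K]

lemma indep_push {σ : Type*} {r : ℕ} (φ : Fin r → Polynomial K)
    (h : LinearIndependent K φ) (c : Fin r → MvPolynomial σ K)
    (hsum : ∑ j, Polynomial.C (c j) * (φ j).map (MvPolynomial.C (σ := σ)) = 0) :
    ∀ j, c j = 0 := by
  classical
  have hco : ∀ (d : ℕ) (μ : σ →₀ ℕ),
      ∑ j, MvPolynomial.coeff μ (c j) * (φ j).coeff d = 0 := by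
    intro d μ
    have h1 := congrArg (fun p => Polynomial.coeff p d) hsum
    simp only [Polynomial.finset_sum_coeff, Polynomial.coeff_C_mul, Polynomial.coeff_map,
      Polynomial.coeff_zero] at h1
    have h1' : ∑ j, MvPolynomial.C ((φ j).coeff d) * c j = 0 := by
      rw [← h1]; exact Finset.sum_congr rfl (fun j _ => mul_comm _ _)
    have h2 := congrArg (MvPolynomial.coeff μ) h1'
    simp only [MvPolynomial.coeff_sum, MvPolynomial.coeff_C_mul, MvPolynomial.coeff_zero] at h2
    rw [← h2]
    exact Finset.sum_congr rfl (fun j _ => mul_comm _ _)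
  intro j
  apply MvPolynomial.ext
  intro μ
  have := Fintype.linearIndependent_iff.mp h (fun j => MvPolynomial.coeff μ (c j)) ?_ j
  · simpa using this
  · apply Polynomial.ext
    intro d
    simp only [Polynomial.finset_sum_coeff, Polynomial.coeff_smul, smul_eq_mul,
      Polynomial.coeff_zero]
    exact hco d μ

theorem det_eval_ne_zero : ∀ (m : ℕ) (φ : Fin m → Polynomial K),
    LinearIndependent K φ →
    (Matrix.det (Matrix.of (fun i j : Fin m =>
      Polynomial.eval₂ (MvPolynomial.C : K →+* MvPolynomial (Fin m) K)
        (MvPolynomial.X i) (φ j)))) ≠ 0 := by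
  intro m
  induction m with
  | zero =>
      intro φ _
      rw [Matrix.det_fin_zero]
      exact one_ne_zero
  | succ m ih =>
      intro φ h
      intro hdet0
      set ε := (MvPolynomial.finSuccEquiv K m).toRingHom with hε
      set M : Matrix (Fin (m+1)) (Fin (m+1)) (MvPolynomial (Fin (m+1)) K) :=
        Matrix.of (fun i j => Polynomial.eval₂ MvPolynomial.C (MvPolynomial.X i) (φ j)) with hM
      have hεC : ∀ a : K, ε (MvPolynomial.C a) = Polynomial.C (MvPolynomial.C a) := by
        intro a
        simp [hε, MvPolynomial.finSuccEquiv_apply]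
      have hεC' : ε.comp MvPolynomial.C
          = (Polynomial.C).comp (MvPolynomial.C (σ := Fin m)) := RingHom.ext hεC
      have hdet' : (ε.mapMatrix M).det = 0 := by
        rw [← RingHom.map_det, hdet0, map_zero]
      have hrow0 : ∀ j, (ε.mapMatrix M) 0 j = ((φ j).map (MvPolynomial.C (σ := Fin m))) := by
        intro j
        simp only [RingHom.mapMatrix_apply, Matrix.map_apply, hM, Matrix.of_apply]
        rw [Polynomial.hom_eval₂, hεC']
        rw [show ε (MvPolynomial.X 0) = Polynomial.X from MvPolynomial.finSuccEquiv_X_zero]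
        rfl
      have hrest : ∀ (i : Fin m) (j : Fin (m+1)), (ε.mapMatrix M) i.succ j
          = Polynomial.C (Polynomial.eval₂ MvPolynomial.C (MvPolynomial.X i) (φ j)) := by
        intro i j
        simp only [RingHom.mapMatrix_apply, Matrix.map_apply, hM, Matrix.of_apply]
        rw [Polynomial.hom_eval₂, hεC']
        rw [show ε (MvPolynomial.X i.succ) = Polynomial.C (MvPolynomial.X i) from
          MvPolynomial.finSuccEquiv_X_succ]
        exact (Polynomial.hom_eval₂ _ _ _ _).symm
      rw [Matrix.det_succ_row_zero] at hdet'
      set A : Fin (m+1) → MvPolynomial (Fin m) K := fun j =>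
        Matrix.det (Matrix.of (fun i j' : Fin m =>
          Polynomial.eval₂ MvPolynomial.C (MvPolynomial.X i) (φ (Fin.succAbove j j')))) with hA
      have hminor : ∀ j : Fin (m+1),
          ((ε.mapMatrix M).submatrix Fin.succ j.succAbove).det = Polynomial.C (A j) := by
        intro j
        have heq2 : (ε.mapMatrix M).submatrix Fin.succ j.succAbove
            = (Polynomial.C : MvPolynomial (Fin m) K →+* _).mapMatrix
              (Matrix.of (fun i j' : Fin m =>
                Polynomial.eval₂ MvPolynomial.C (MvPolynomial.X i)
                  (φ (Fin.succAbove j j')))) := by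
          refine Matrix.ext (fun i j' => ?_)
          exact hrest i (j.succAbove j')
        rw [heq2, ← RingHom.map_det]
      have heq : ∑ j : Fin (m+1), Polynomial.C ((-1) ^ (j : ℕ) * A j)
          * ((φ j).map (MvPolynomial.C (σ := Fin m))) = 0 := by
        rw [← hdet']
        apply Finset.sum_congr rfl
        intro j _
        rw [hrow0, hminor]
        simp only [map_mul, map_pow, map_neg, map_one]
        ring
      have hzero := indep_push φ h _ heq
      have h0 := hzero 0
      simp only [Fin.val_zero, pow_zero, one_mul] at h0
      exact (ih (fun j' => φ (Fin.succAbove 0 j'))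
        (h.comp _ Fin.succAbove_right_injective)) h0

theorem det_eval_ne_zero' {ι : Type*} [Fintype ι] [DecidableEq ι]
    (φ : ι → Polynomial K) (h : LinearIndependent K φ) :
    (Matrix.det (Matrix.of (fun i j : ι =>
      Polynomial.eval₂ (MvPolynomial.C : K →+* MvPolynomial ι K)
        (MvPolynomial.X i) (φ j)))) ≠ 0 := by
  classical
  set e := Fintype.equivFin ι with he
  set ρ := (MvPolynomial.renameEquiv K e).toRingHom with hρ
  intro hdet0
  have h1 : (ρ.mapMatrix (Matrix.of (fun i j : ι =>
      Polynomial.eval₂ (MvPolynomial.C : K →+* MvPolynomial ι K)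
        (MvPolynomial.X i) (φ j)))).det = 0 := by
    rw [← RingHom.map_det, hdet0, map_zero]
  rw [← Matrix.det_submatrix_equiv_self e.symm] at h1
  have h2 : ((ρ.mapMatrix (Matrix.of (fun i j : ι =>
      Polynomial.eval₂ (MvPolynomial.C : K →+* MvPolynomial ι K)
        (MvPolynomial.X i) (φ j))))).submatrix e.symm e.symm
      = Matrix.of (fun i j : Fin (Fintype.card ι) =>
          Polynomial.eval₂ (MvPolynomial.C : K →+* MvPolynomial (Fin (Fintype.card ι)) K)
            (MvPolynomial.X i) (φ (e.symm j))) := by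
    refine Matrix.ext (fun i j => ?_)
    show ρ (Polynomial.eval₂ MvPolynomial.C (MvPolynomial.X (e.symm i)) (φ (e.symm j))) = _
    rw [Polynomial.hom_eval₂]
    have hC : ρ.comp MvPolynomial.C = (MvPolynomial.C : K →+* MvPolynomial (Fin (Fintype.card ι)) K) := by
      apply RingHom.ext; intro a; simp [hρ]
    have hX : ρ (MvPolynomial.X (e.symm i)) = MvPolynomial.X i := by
      simp [hρ]
    rw [hC, hX]
    rfl
  rw [h2] at h1
  exact det_eval_ne_zero (Fintype.card ι) (fun j => φ (e.symm j))
    (h.comp _ e.symm.injective) h1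

end VDM

section LIND


open Finset Polynomial

variable {K : Type*} [Field K] {n : ℕ}

lemma concrete_indep (a : Fin n → K) (hinj : Function.Injective a)
    (B₁ B₂ : Finset (Fin n)) (c₁ c₂ : ℕ)
    (hdeg₁ : c₁ ≤ (B₂ \ B₁).card) :
    LinearIndependent K (Sum.elim
      (fun j : Fin c₁ => (∏ w ∈ B₁, (X - C (a w))) * X ^ (j : ℕ))
      (fun j : Fin c₂ => (∏ w ∈ B₂, (X - C (a w))) * X ^ (j : ℕ))) := by
  classical
  rw [Fintype.linearIndependent_iff]
  intro c hc
  set g₁ : Polynomial K := ∏ w ∈ B₁, (X - C (a w)) with hg₁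
  set g₂ : Polynomial K := ∏ w ∈ B₂, (X - C (a w)) with hg₂
  set U : Polynomial K := ∑ j : Fin c₁, C (c (Sum.inl j)) * X ^ (j : ℕ) with hU
  set V : Polynomial K := ∑ j : Fin c₂, C (c (Sum.inr j)) * X ^ (j : ℕ) with hV
  have hsplit : g₁ * U + g₂ * V = 0 := by
    rw [← hc]
    rw [Fintype.sum_sum_type]
    rw [hU, hV, Finset.mul_sum, Finset.mul_sum]
    congr 1 <;> exact Finset.sum_congr rfl (fun j _ => by
      simp [Polynomial.smul_eq_C_mul]; ring)
  have hUdeg : ∀ (W : Polynomial K) (m : ℕ) (cc : Fin m → K),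
      (∑ j : Fin m, C (cc j) * X ^ (j : ℕ)).natDegree < m ∨ m = 0 := by
    intro W m cc
    rcases Nat.eq_zero_or_pos m with h0 | hpos
    · right; exact h0
    · left
      have : (∑ j : Fin m, C (cc j) * X ^ (j : ℕ)).natDegree ≤ m - 1 := by
        apply Polynomial.natDegree_sum_le_of_forall_le
        intro j _
        refine le_trans (Polynomial.natDegree_C_mul_le _ _) ?_
        simp only [Polynomial.natDegree_X_pow]
        omega
      omega
  -- coefficients from the polynomial
  have hcoeffU : ∀ j : Fin c₁, U.coeff (j : ℕ) = c (Sum.inl j) := by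
    intro j
    rw [hU, Polynomial.finset_sum_coeff]
    rw [Finset.sum_eq_single j]
    · simp
    · intro j' _ hne
      simp only [Polynomial.coeff_C_mul, Polynomial.coeff_X_pow]
      rw [if_neg (by simpa [Fin.val_eq_val] using hne.symm)]
      ring
    · simp
  have hcoeffV : ∀ j : Fin c₂, V.coeff (j : ℕ) = c (Sum.inr j) := by
    intro j
    rw [hV, Polynomial.finset_sum_coeff]
    rw [Finset.sum_eq_single j]
    · simp
    · intro j' _ hne
      simp only [Polynomial.coeff_C_mul, Polynomial.coeff_X_pow]
      rw [if_neg (by simpa [Fin.val_eq_val] using hne.symm)]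
      ring
    · simp
  -- U vanishes on the image of B₂ \ B₁
  have hUzero : U = 0 := by
    rcases Nat.eq_zero_or_pos c₁ with h0 | hpos
    · rw [hU]
      apply Finset.sum_eq_zero
      intro j _
      exact absurd j.2 (by omega)
    have hUroots : ∀ x ∈ (B₂ \ B₁).image a, U.eval x = 0 := by
      intro x hx
      obtain ⟨w, hw, rfl⟩ := Finset.mem_image.mp hx
      have hw₂ : w ∈ B₂ := (Finset.mem_sdiff.mp hw).1
      have hw₁ : w ∉ B₁ := (Finset.mem_sdiff.mp hw).2
      have h2 : g₂.eval (a w) = 0 := by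
        rw [hg₂, Polynomial.eval_prod]
        apply Finset.prod_eq_zero hw₂
        simp
      have h1 : g₁.eval (a w) ≠ 0 := by
        rw [hg₁, Polynomial.eval_prod]
        rw [Finset.prod_ne_zero_iff]
        intro w' hw'
        simp only [Polynomial.eval_sub, Polynomial.eval_X, Polynomial.eval_C]
        intro hzz
        exact hw₁ (by rwa [hinj (sub_eq_zero.mp hzz)])
      have h3 : g₁.eval (a w) * U.eval (a w) = 0 := by
        have := congrArg (Polynomial.eval (a w)) hsplit
        simpa [h2] using this
      rcases mul_eq_zero.mp h3 with h | h
      · exact absurd h h1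
      · exact h
    apply Polynomial.eq_zero_of_natDegree_lt_card_of_eval_eq_zero' U ((B₂ \ B₁).image a)
      hUroots
    have hcard : ((B₂ \ B₁).image a).card = (B₂ \ B₁).card :=
      Finset.card_image_of_injective _ hinj
    rcases hUdeg U c₁ (fun j => c (Sum.inl j)) with h | h
    · rw [hcard]; exact lt_of_lt_of_le h hdeg₁
    · omega
  have hVzero : V = 0 := by
    have hg₂ne : g₂ ≠ 0 := by
      apply Polynomial.Monic.ne_zero
      apply Polynomial.monic_prod_of_monic
      intro w _
      exact Polynomial.monic_X_sub_C _
    have : g₂ * V = 0 := by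
      have := hsplit
      rw [hUzero, mul_zero, zero_add] at this
      exact this
    rcases mul_eq_zero.mp this with h | h
    · exact absurd h hg₂ne
    · exact h
  intro j
  rcases j with j | j
  · rw [← hcoeffU j, hUzero, Polynomial.coeff_zero]
  · rw [← hcoeffV j, hVzero, Polynomial.coeff_zero]

lemma prod_X_sub_C_dvd_of_roots (p : Polynomial K) (hp : p ≠ 0)
    (s : Finset (Fin n)) (a : Fin n → K) (hinj : Function.Injective a)
    (hroots : ∀ w ∈ s, p.eval (a w) = 0) :
    (∏ w ∈ s, (X - C (a w))) ∣ p := by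
  classical
  have heq : (∏ w ∈ s, (X - C (a w))) = ((s.val.map a).map (fun x => X - C x)).prod := by
    rw [Multiset.map_map]
    rfl
  rw [heq]
  rw [Multiset.prod_X_sub_C_dvd_iff_le_roots hp]
  rw [Multiset.le_iff_count]
  intro x
  have hnd : (s.val.map a).Nodup := Multiset.Nodup.map hinj s.nodup
  rcases Nat.eq_zero_or_pos (Multiset.count x (s.val.map a)) with h0 | hpos
  · omega
  · have hmem : x ∈ s.val.map a := Multiset.count_pos.mp hpos
    obtain ⟨w, hw, rfl⟩ := Multiset.mem_map.mp hmem
    have hroot : a w ∈ p.roots := by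
      rw [Polynomial.mem_roots hp]
      exact hroots w hw
    have h1 : Multiset.count (a w) (s.val.map a) ≤ 1 :=
      Multiset.nodup_iff_count_le_one.mp hnd _
    have h2 : 1 ≤ Multiset.count (a w) p.roots := Multiset.one_le_count_iff_mem.mpr hroot
    omega

end LIND

section PATTERN
open MvPolynomial Finset

variable {F : Type*} [Field F]

set_option maxHeartbeats 3000000 in
lemma pattern_poly (n k : ℕ) (A₁ A₂ A₃ : Finset (Fin n))
    (hb₁ : (A₁ ∩ A₂).card < k) (hb₂ : (A₂ ∩ A₃).card < k) (hb₃ : (A₁ ∩ A₃).card < k)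
    (hsum : 2 * k + (A₁ ∩ A₂ ∩ A₃).card ≤
      (A₁ ∩ A₂).card + (A₂ ∩ A₃).card + (A₁ ∩ A₃).card) :
    ∃ D : MvPolynomial (Fin n) F, D ≠ 0 ∧ D.totalDegree ≤ k * k ∧
      ∀ α : Fin n → F, Function.Injective α →
        ∀ f₁ f₂ f₃ : Polynomial F,
          f₁.natDegree < k → f₂.natDegree < k → f₃.natDegree < k →
          f₁ ≠ f₂ → f₂ ≠ f₃ → f₁ ≠ f₃ →
          (∀ w ∈ A₁ ∩ A₂, f₁.eval (α w) = f₂.eval (α w)) →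
          (∀ w ∈ A₂ ∩ A₃, f₂.eval (α w) = f₃.eval (α w)) →
          (∀ w ∈ A₁ ∩ A₃, f₁.eval (α w) = f₃.eval (α w)) →
          MvPolynomial.eval α D = 0 := by
  classical
  set B₁ := A₁ ∩ A₂ with hB₁
  set B₂ := A₂ ∩ A₃ with hB₂
  set B₃ := A₁ ∩ A₃ with hB₃
  set T := A₁ ∩ A₂ ∩ A₃ with hT
  have hT12 : B₂ ∩ B₁ = T := by
    ext w; simp only [hB₁, hB₂, hT, Finset.mem_inter]; tauto
  have hsdB : B₃ ∩ (B₁ ∪ B₂) = T := by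
    ext w; simp only [hB₁, hB₂, hB₃, hT, Finset.mem_inter, Finset.mem_union]; tauto
  have hcs : T.card + (B₃ \ (B₁ ∪ B₂)).card = B₃.card := by
    have := Finset.card_inter_add_card_sdiff B₃ (B₁ ∪ B₂)
    rwa [hsdB] at this
  have hcs2 : T.card + (B₂ \ B₁).card = B₂.card := by
    have := Finset.card_inter_add_card_sdiff B₂ B₁
    rwa [hT12] at this
  set c₁ := k - B₁.card with hc₁
  set c₂ := k - B₂.card with hc₂
  have hRsize : c₁ + c₂ ≤ (B₃ \ (B₁ ∪ B₂)).card := by omega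
  have hdeg₁ : c₁ ≤ (B₂ \ B₁).card := by omega
  obtain ⟨R, hRsub, hRcard⟩ := Finset.exists_subset_card_eq hRsize
  set r : Fin c₁ ⊕ Fin c₂ → Fin n := fun i =>
    ((R.equivFin.symm (finCongr hRcard.symm (finSumFinEquiv i))) : Fin n) with hr
  have hrinj : Function.Injective r := by
    intro i j h
    exact finSumFinEquiv.injective ((finCongr hRcard.symm).injective
      (R.equivFin.symm.injective (Subtype.coe_injective h)))
  have hrR : ∀ i, r i ∈ B₃ \ (B₁ ∪ B₂) := fun i =>
    hRsub (R.equivFin.symm (finCongr hRcard.symm (finSumFinEquiv i))).2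
  have hrB₃ : ∀ i, r i ∈ B₃ := fun i => (Finset.mem_sdiff.mp (hrR i)).1
  have hrnB : ∀ i, r i ∉ B₁ ∪ B₂ := fun i => (Finset.mem_sdiff.mp (hrR i)).2
  set M : Matrix (Fin c₁ ⊕ Fin c₂) (Fin c₁ ⊕ Fin c₂) (MvPolynomial (Fin n) F) :=
    Matrix.of (fun i j => Sum.elim
      (fun j₁ : Fin c₁ => (∏ w ∈ B₁, (X (r i) - X w)) * X (r i) ^ (j₁ : ℕ))
      (fun j₂ : Fin c₂ => (∏ w ∈ B₂, (X (r i) - X w)) * X (r i) ^ (j₂ : ℕ)) j) with hMdef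
  refine ⟨M.det, ?_, ?_, ?_⟩
  · -- nonvanishing
    set L := FractionRing (MvPolynomial (Fin n) F) with hL
    set ιL : MvPolynomial (Fin n) F →+* L := algebraMap (MvPolynomial (Fin n) F) L with hιL
    have hιLinj : Function.Injective ιL := IsFractionRing.injective _ _
    set aL : Fin n → L := fun w => ιL (X w) with haLdef
    have haL : Function.Injective aL := by
      intro w w' h
      exact MvPolynomial.X_injective (hιLinj h)
    set Θ : MvPolynomial (Fin n) F →+* MvPolynomial (Fin c₁ ⊕ Fin c₂) L :=
      MvPolynomial.eval₂Hom
        ((MvPolynomial.C : L →+* MvPolynomial (Fin c₁ ⊕ Fin c₂) L).comp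
          (ιL.comp (MvPolynomial.C : F →+* MvPolynomial (Fin n) F)))
        (fun v => if h : ∃ i, r i = v then X h.choose else MvPolynomial.C (aL v)) with hΘ
    have hΘX_r : ∀ i, Θ (X (r i)) = X i := by
      intro i
      rw [hΘ, MvPolynomial.eval₂Hom_X']
      have h : ∃ i', r i' = r i := ⟨i, rfl⟩
      rw [dif_pos h]
      congr 1
      exact hrinj h.choose_spec
    have hΘX_nr : ∀ v, (¬ ∃ i, r i = v) → Θ (X v) = MvPolynomial.C (aL v) := by
      intro v hv
      rw [hΘ, MvPolynomial.eval₂Hom_X', dif_neg hv]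
    have hΘinj : Function.Injective Θ := by
      set π : MvPolynomial (Fin c₁ ⊕ Fin c₂) L →+* L :=
        MvPolynomial.eval₂Hom (RingHom.id L) (fun i => aL (r i)) with hπ
      have hcομ : π.comp Θ = ιL := by
        apply MvPolynomial.ringHom_ext
        · intro a
          simp [hπ, hΘ]
        · intro v
          by_cases h : ∃ i, r i = v
          · rw [RingHom.comp_apply, hΘ, MvPolynomial.eval₂Hom_X', dif_pos h, hπ,
              MvPolynomial.eval₂Hom_X']
            rw [haLdef]
            rw [h.choose_spec]
          · rw [RingHom.comp_apply, hΘ, MvPolynomial.eval₂Hom_X', dif_neg h, hπ]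
            simp [haLdef]
      intro p q hpq
      apply hιLinj
      rw [← hcομ]
      simp only [RingHom.comp_apply, hpq]
    set φ : Fin c₁ ⊕ Fin c₂ → Polynomial L := Sum.elim
      (fun j₁ : Fin c₁ => (∏ w ∈ B₁, (Polynomial.X - Polynomial.C (aL w)))
        * Polynomial.X ^ (j₁ : ℕ))
      (fun j₂ : Fin c₂ => (∏ w ∈ B₂, (Polynomial.X - Polynomial.C (aL w)))
        * Polynomial.X ^ (j₂ : ℕ)) with hφ
    have hφindep : LinearIndependent L φ := concrete_indep aL haL B₁ B₂ c₁ c₂ hdeg₁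
    have hmap : Θ.mapMatrix M = Matrix.of (fun i j : Fin c₁ ⊕ Fin c₂ =>
        Polynomial.eval₂ (MvPolynomial.C : L →+* MvPolynomial (Fin c₁ ⊕ Fin c₂) L)
          (MvPolynomial.X i) (φ j)) := by
      refine Matrix.ext (fun i j => ?_)
      have hXw : ∀ w ∈ B₁ ∪ B₂, Θ (X w) = MvPolynomial.C (aL w) := by
        intro w hw
        apply hΘX_nr
        rintro ⟨i', rfl⟩
        exact hrnB i' hw
      rcases j with j | j
      · rw [RingHom.mapMatrix_apply, Matrix.map_apply, hMdef, Matrix.of_apply, Sum.elim_inl]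
        rw [map_mul, map_prod, map_pow, hΘX_r]
        show (∏ w ∈ B₁, Θ (X (r i) - X w)) * (X i) ^ (j:ℕ)
          = Polynomial.eval₂ _ (MvPolynomial.X i) (φ (Sum.inl j))
        rw [hφ]
        simp only [Sum.elim_inl]
        rw [Polynomial.eval₂_mul, Polynomial.eval₂_finset_prod]
        rw [Polynomial.eval₂_pow, Polynomial.eval₂_X]
        congr 1
        apply Finset.prod_congr rfl
        intro w hw
        rw [map_sub, hΘX_r, hXw w (Finset.mem_union_left _ hw)]
        rw [Polynomial.eval₂_sub, Polynomial.eval₂_X, Polynomial.eval₂_C]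
      · rw [RingHom.mapMatrix_apply, Matrix.map_apply, hMdef, Matrix.of_apply, Sum.elim_inr]
        rw [map_mul, map_prod, map_pow, hΘX_r]
        show (∏ w ∈ B₂, Θ (X (r i) - X w)) * (X i) ^ (j:ℕ)
          = Polynomial.eval₂ _ (MvPolynomial.X i) (φ (Sum.inr j))
        rw [hφ]
        simp only [Sum.elim_inr]
        rw [Polynomial.eval₂_mul, Polynomial.eval₂_finset_prod]
        rw [Polynomial.eval₂_pow, Polynomial.eval₂_X]
        congr 1
        apply Finset.prod_congr rfl
        intro w hw
        rw [map_sub, hΘX_r, hXw w (Finset.mem_union_right _ hw)]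
        rw [Polynomial.eval₂_sub, Polynomial.eval₂_X, Polynomial.eval₂_C]
    intro hdet0
    have h1 : Θ M.det = 0 := by rw [hdet0, map_zero]
    rw [RingHom.map_det, hmap] at h1
    exact det_eval_ne_zero' φ hφindep h1
  · -- degree bound
    have hentry : ∀ (i j : Fin c₁ ⊕ Fin c₂), (M i j).totalDegree ≤
        Sum.elim (fun j₁ : Fin c₁ => B₁.card + (j₁ : ℕ))
          (fun j₂ : Fin c₂ => B₂.card + (j₂ : ℕ)) j := by
      have hXX : ∀ v w : Fin n, ((X v - X w : MvPolynomial (Fin n) F)).totalDegree ≤ 1 := by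
        intro v w
        refine le_trans (MvPolynomial.totalDegree_sub _ _) ?_
        simp [MvPolynomial.totalDegree_X]
      intro i j
      rcases j with j | j <;>
      · simp only [hMdef, Matrix.of_apply, Sum.elim_inl, Sum.elim_inr]
        refine le_trans (MvPolynomial.totalDegree_mul _ _) ?_
        apply Nat.add_le_add
        · refine le_trans (MvPolynomial.totalDegree_finset_prod _ _) ?_
          refine le_trans (Finset.sum_le_card_nsmul _ _ 1 (fun w _ => hXX _ _)) ?_
          simp
        · refine le_trans (MvPolynomial.totalDegree_pow _ _) ?_
          simp [MvPolynomial.totalDegree_X]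
    rw [Matrix.det_apply]
    refine le_trans (MvPolynomial.totalDegree_finset_sum _ _) ?_
    apply Finset.sup_le
    intro σ _
    have hsgn : (Equiv.Perm.sign σ • ∏ i, M (σ i) i).totalDegree
        = (∏ i, M (σ i) i).totalDegree := by
      rcases Int.units_eq_one_or (Equiv.Perm.sign σ) with h | h <;> rw [h]
      · rw [one_smul]
      · rw [Units.neg_smul, one_smul, MvPolynomial.totalDegree_neg]
    rw [hsgn]
    refine le_trans (MvPolynomial.totalDegree_finset_prod _ _) ?_
    refine le_trans (Finset.sum_le_sum (fun j _ => hentry (σ j) j)) ?_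
    -- arithmetic
    rw [Fintype.sum_sum_type]
    simp only [Sum.elim_inl, Sum.elim_inr]
    have hgauss : ∀ (c b : ℕ), c + b ≤ k → (∑ j : Fin c, (b + (j : ℕ))) * 2 ≤ k * k := by
      intro c b hcb
      have h1 : (∑ j : Fin c, (b + (j : ℕ))) = c * b + ∑ j ∈ Finset.range c, j := by
        rw [Fin.sum_univ_eq_sum_range (fun j => b + j)]
        rw [Finset.sum_add_distrib]
        simp [Finset.sum_const, mul_comm]
      have h2 : (∑ j ∈ Finset.range c, j) * 2 = c * (c - 1) := Finset.sum_range_id_mul_two c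
      nlinarith [Nat.sub_le c 1, Nat.mul_le_mul_right 2 (Nat.le_refl (c*b))]
    have h1 := hgauss c₁ B₁.card (by omega)
    have h2 := hgauss c₂ B₂.card (by omega)
    omega
  · -- vanishing
    intro α hαinj f₁ f₂ f₃ hd₁ hd₂ hd₃ h12 h23 h13 e12 e23 e13
    set g : Polynomial F := f₁ - f₂ with hg
    set h : Polynomial F := f₂ - f₃ with hh
    have hgne : g ≠ 0 := sub_ne_zero.mpr h12
    have hhne : h ≠ 0 := sub_ne_zero.mpr h23
    have hgroots : ∀ w ∈ B₁, g.eval (α w) = 0 := by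
      intro w hw
      simp only [hg, Polynomial.eval_sub]
      rw [e12 w hw]; ring
    have hhroots : ∀ w ∈ B₂, h.eval (α w) = 0 := by
      intro w hw
      simp only [hh, Polynomial.eval_sub]
      rw [e23 w hw]; ring
    obtain ⟨u, hu⟩ := prod_X_sub_C_dvd_of_roots g hgne B₁ α hαinj hgroots
    obtain ⟨v, hv⟩ := prod_X_sub_C_dvd_of_roots h hhne B₂ α hαinj hhroots
    have hG₁monic : (∏ w ∈ B₁, (Polynomial.X - Polynomial.C (α w))).Monic :=
      Polynomial.monic_prod_of_monic _ _ (fun w _ => Polynomial.monic_X_sub_C _)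
    have hG₂monic : (∏ w ∈ B₂, (Polynomial.X - Polynomial.C (α w))).Monic :=
      Polynomial.monic_prod_of_monic _ _ (fun w _ => Polynomial.monic_X_sub_C _)
    have hune : u ≠ 0 := by
      intro h0; rw [h0, mul_zero] at hu; exact hgne hu
    have hvne : v ≠ 0 := by
      intro h0; rw [h0, mul_zero] at hv; exact hhne hv
    have hudeg : u.natDegree < c₁ := by
      have hdegG : (∏ w ∈ B₁, (Polynomial.X - Polynomial.C (α w))).natDegree = B₁.card := by
        rw [Polynomial.natDegree_prod _ _ (fun w _ => Polynomial.X_sub_C_ne_zero _)]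
        simp [Polynomial.natDegree_X_sub_C]
      have := Polynomial.natDegree_mul (Polynomial.Monic.ne_zero hG₁monic) hune
      rw [← hu, hdegG] at this
      have hgdeg : g.natDegree < k := by
        refine lt_of_le_of_lt (Polynomial.natDegree_sub_le _ _) ?_
        exact max_lt hd₁ hd₂
      omega
    have hvdeg : v.natDegree < c₂ := by
      have hdegG : (∏ w ∈ B₂, (Polynomial.X - Polynomial.C (α w))).natDegree = B₂.card := by
        rw [Polynomial.natDegree_prod _ _ (fun w _ => Polynomial.X_sub_C_ne_zero _)]
        simp [Polynomial.natDegree_X_sub_C]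
      have := Polynomial.natDegree_mul (Polynomial.Monic.ne_zero hG₂monic) hvne
      rw [← hv, hdegG] at this
      have hhdeg : h.natDegree < k := by
        refine lt_of_le_of_lt (Polynomial.natDegree_sub_le _ _) ?_
        exact max_lt hd₂ hd₃
      omega
    -- the kernel vector
    set x : Fin c₁ ⊕ Fin c₂ → F := Sum.elim (fun j => u.coeff (j : ℕ))
      (fun j => v.coeff (j : ℕ)) with hx
    have hxne : x ≠ 0 := by
      intro h0
      apply hune
      apply Polynomial.ext
      intro m
      rcases lt_or_ge m c₁ with hm | hm
      · have := congrFun h0 (Sum.inl ⟨m, hm⟩)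
        simpa [hx] using this
      · rw [Polynomial.coeff_eq_zero_of_natDegree_lt (lt_of_lt_of_le hudeg hm)]
        simp
    set Mα := ((MvPolynomial.eval α : MvPolynomial (Fin n) F →+* F).mapMatrix M) with hMα
    have hmul : Mα.mulVec x = 0 := by
      funext i
      show (∑ j, Mα i j * x j) = 0
      rw [Fintype.sum_sum_type]
      have hGeval : ∀ (B : Finset (Fin n)),
          MvPolynomial.eval α (∏ w ∈ B, (X (r i) - X w))
          = (∏ w ∈ B, (Polynomial.X - Polynomial.C (α w))).eval (α (r i)) := by
        intro B
        rw [map_prod, Polynomial.eval_prod]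
        apply Finset.prod_congr rfl
        intro w _
        simp
      have h₁ : ∑ j : Fin c₁, Mα i (Sum.inl j) * x (Sum.inl j)
          = g.eval (α (r i)) := by
        have : ∀ j : Fin c₁, Mα i (Sum.inl j) * x (Sum.inl j)
            = (∏ w ∈ B₁, (Polynomial.X - Polynomial.C (α w))).eval (α (r i))
              * (u.coeff (j:ℕ) * (α (r i)) ^ (j:ℕ)) := by
          intro j
          show (MvPolynomial.eval α) ((∏ w ∈ B₁, (X (r i) - X w)) * X (r i) ^ (j : ℕ))
              * u.coeff (j:ℕ) = _
          rw [map_mul, hGeval B₁, map_pow, MvPolynomial.eval_X]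
          ring
        rw [Finset.sum_congr rfl (fun j _ => this j), ← Finset.mul_sum]
        rw [hu, Polynomial.eval_mul]
        congr 1
        rw [Polynomial.eval_eq_sum_range' hudeg]
        rw [Fin.sum_univ_eq_sum_range (fun j => u.coeff j * (α (r i)) ^ j)]
      have h₂ : ∑ j : Fin c₂, Mα i (Sum.inr j) * x (Sum.inr j)
          = h.eval (α (r i)) := by
        have : ∀ j : Fin c₂, Mα i (Sum.inr j) * x (Sum.inr j)
            = (∏ w ∈ B₂, (Polynomial.X - Polynomial.C (α w))).eval (α (r i))
              * (v.coeff (j:ℕ) * (α (r i)) ^ (j:ℕ)) := by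
          intro j
          show (MvPolynomial.eval α) ((∏ w ∈ B₂, (X (r i) - X w)) * X (r i) ^ (j : ℕ))
              * v.coeff (j:ℕ) = _
          rw [map_mul, hGeval B₂, map_pow, MvPolynomial.eval_X]
          ring
        rw [Finset.sum_congr rfl (fun j _ => this j), ← Finset.mul_sum]
        rw [hv, Polynomial.eval_mul]
        congr 1
        rw [Polynomial.eval_eq_sum_range' hvdeg]
        rw [Fin.sum_univ_eq_sum_range (fun j => v.coeff j * (α (r i)) ^ j)]
      rw [h₁, h₂]
      have : g + h = f₁ - f₃ := by rw [hg, hh]; ring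
      have h3 : g.eval (α (r i)) + h.eval (α (r i)) = (f₁ - f₃).eval (α (r i)) := by
        rw [← Polynomial.eval_add, this]
      rw [h3, Polynomial.eval_sub]
      rw [e13 (r i) (hrB₃ i)]
      ring
    have hdetα : Mα.det = 0 := by
      rw [← Matrix.exists_mulVec_eq_zero_iff]
      exact ⟨x, hxne, hmul⟩
    rw [← RingHom.map_det] at hdetα
    exact hdetα
end PATTERN

end Helpers

open MvPolynomial Finset in
/-- Existence of optimal 2 list-decodable RS codes: with `c = 2^{3n}k² + n²`, all but at most
`c·q^{n-1}` vectors `α ∈ F_q^n` have distinct coordinates and define an `[n,k]`-RS code that is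
`((2/3)(1 - k/n), 2)` list-decodable. -/
theorem stmt_6 (n k : ℕ) (hk : 0 < k) (hkn : k < n)
    (F : Type*) [Field F] [Fintype F] [DecidableEq F] :
    Nat.card {α : Fin n → F // ¬ (Function.Injective α ∧
        listDecodable (RScode F n k α) ((2 / 3) * (1 - (k : ℝ) / n)) 2)} ≤
      (2 ^ (3 * n) * k ^ 2 + n ^ 2) * Fintype.card F ^ (n - 1) := by
  classical
  have hn1 : 1 ≤ n := by omega
  set q := Fintype.card F with hq
  set LD : (Fin n → F) → Prop := fun α =>
    listDecodable (RScode F n k α) ((2 / 3) * (1 - (k : ℝ) / n)) 2 with hLD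
  have hcount : Nat.card {α : Fin n → F // ¬ (Function.Injective α ∧ LD α)}
      = (univ.filter (fun α : Fin n → F => ¬ (Function.Injective α ∧ LD α))).card := by
    rw [Nat.card_eq_fintype_card, Fintype.card_subtype]
  rw [hcount]
  have hsplit : (univ.filter (fun α : Fin n → F => ¬ (Function.Injective α ∧ LD α)))
      ⊆ (univ.filter (fun α : Fin n → F => ¬ Function.Injective α))
        ∪ (univ.filter (fun α : Fin n → F => Function.Injective α ∧ ¬ LD α)) := by
    intro α hα
    simp only [Finset.mem_filter, Finset.mem_union, Finset.mem_univ, true_and] at *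
    tauto
  have hNI : (univ.filter (fun α : Fin n → F => ¬ Function.Injective α)).card
      ≤ n ^ 2 * q ^ (n - 1) := by
    have hsub : (univ.filter (fun α : Fin n → F => ¬ Function.Injective α))
        ⊆ ((univ : Finset (Fin n)).offDiag).biUnion (fun p : Fin n × Fin n =>
            univ.filter (fun α : Fin n → F =>
              MvPolynomial.eval α (X p.1 - X p.2 : MvPolynomial (Fin n) F) = 0)) := by
      intro α hα
      replace hα := (Finset.mem_filter.mp hα).2
      simp only [Function.Injective] at hα
      push_neg at hα
      obtain ⟨i, j, hij, hne⟩ := hα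
      apply Finset.mem_biUnion.mpr
      refine ⟨(i, j), Finset.mem_offDiag.mpr ⟨Finset.mem_univ _, Finset.mem_univ _, hne⟩, ?_⟩
      simp only [Finset.mem_filter, Finset.mem_univ, true_and, map_sub, MvPolynomial.eval_X]
      rw [hij]
      ring
    refine le_trans (Finset.card_le_card hsub) (le_trans Finset.card_biUnion_le ?_)
    have hone : ∀ p ∈ (univ : Finset (Fin n)).offDiag,
        (univ.filter (fun α : Fin n → F =>
          MvPolynomial.eval α (X p.1 - X p.2 : MvPolynomial (Fin n) F) = 0)).card
          ≤ q ^ (n - 1) := by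
      intro p hp
      have hne : p.1 ≠ p.2 := (Finset.mem_offDiag.mp hp).2.2
      have hXne : (X p.1 - X p.2 : MvPolynomial (Fin n) F) ≠ 0 := by
        intro h0
        exact hne (MvPolynomial.X_injective (sub_eq_zero.mp h0))
      refine le_trans (sz_card hn1 _ hXne) ?_
      have hd1 : (X p.1 - X p.2 : MvPolynomial (Fin n) F).totalDegree ≤ 1 := by
        refine le_trans (MvPolynomial.totalDegree_sub _ _) ?_
        simp [MvPolynomial.totalDegree_X]
      calc (X p.1 - X p.2 : MvPolynomial (Fin n) F).totalDegree * q ^ (n-1)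
          ≤ 1 * q ^ (n-1) := Nat.mul_le_mul_right _ hd1
        _ = q ^ (n-1) := one_mul _
    refine le_trans (Finset.sum_le_card_nsmul _ _ _ hone) ?_
    rw [smul_eq_mul]
    apply Nat.mul_le_mul_right
    rw [Finset.offDiag_card]
    simp only [Finset.card_univ, Fintype.card_fin]
    refine le_trans (Nat.sub_le _ _) ?_
    rw [pow_two]
  have hBLD : (univ.filter (fun α : Fin n → F => Function.Injective α ∧ ¬ LD α)).card
      ≤ 2 ^ (3 * n) * k ^ 2 * q ^ (n - 1) := by
    set Valid : Finset (Fin n) × Finset (Fin n) × Finset (Fin n) → Prop := fun P =>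
      (P.1 ∩ P.2.1).card < k ∧ (P.2.1 ∩ P.2.2).card < k ∧ (P.1 ∩ P.2.2).card < k ∧
        2 * k + (P.1 ∩ P.2.1 ∩ P.2.2).card ≤
          (P.1 ∩ P.2.1).card + (P.2.1 ∩ P.2.2).card + (P.1 ∩ P.2.2).card with hValid
    have hDex : ∀ P : Finset (Fin n) × Finset (Fin n) × Finset (Fin n),
        ∃ D : MvPolynomial (Fin n) F, Valid P → (D ≠ 0 ∧ D.totalDegree ≤ k * k ∧
          ∀ α : Fin n → F, Function.Injective α →
          ∀ f₁ f₂ f₃ : Polynomial F,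
            f₁.natDegree < k → f₂.natDegree < k → f₃.natDegree < k →
            f₁ ≠ f₂ → f₂ ≠ f₃ → f₁ ≠ f₃ →
            (∀ w ∈ P.1 ∩ P.2.1, f₁.eval (α w) = f₂.eval (α w)) →
            (∀ w ∈ P.2.1 ∩ P.2.2, f₂.eval (α w) = f₃.eval (α w)) →
            (∀ w ∈ P.1 ∩ P.2.2, f₁.eval (α w) = f₃.eval (α w)) →
            MvPolynomial.eval α D = 0) := by
      intro P
      by_cases hP : Valid P
      · obtain ⟨D, h1, h2, h3⟩ := pattern_poly (F := F) n k P.1 P.2.1 P.2.2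
          hP.1 hP.2.1 hP.2.2.1 hP.2.2.2
        exact ⟨D, fun _ => ⟨h1, h2, h3⟩⟩
      · exact ⟨1, fun h => absurd h hP⟩
    choose D hD using hDex
    set Pats := (univ : Finset (Finset (Fin n) × Finset (Fin n) × Finset (Fin n))).filter Valid
      with hPats
    have hsub : (univ.filter (fun α : Fin n → F => Function.Injective α ∧ ¬ LD α))
        ⊆ Pats.biUnion (fun P =>
            univ.filter (fun α : Fin n → F => MvPolynomial.eval α (D P) = 0)) := by
      intro α hα
      simp only [Finset.mem_filter, Finset.mem_univ, true_and] at hα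
      obtain ⟨hαinj, hnLD⟩ := hα
      simp only [hLD, listDecodable, not_forall] at hnLD
      obtain ⟨y, hy⟩ := hnLD
      set S := {c : Fin n → F // c ∈ RScode F n k α ∧
        (hammingDist y c : ℝ) ≤ ((2:ℝ) / 3) * (1 - (k : ℝ) / n) * n} with hS
      haveI : Fintype S := Fintype.ofFinite S
      have hy3 : 3 ≤ (univ : Finset S).card := by
        rw [Finset.card_univ, ← Nat.card_eq_fintype_card]
        omega
      obtain ⟨t, _, ht3⟩ := Finset.exists_subset_card_eq hy3
      obtain ⟨a, b, c, hab, hac, hbc, rfl⟩ := Finset.card_eq_three.mp ht3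
      have hf : ∀ s : S, ∃ f : Polynomial F, f.natDegree < k ∧
          (s : Fin n → F) = fun i => f.eval (α i) := by
        rintro ⟨cc, hcc, _⟩
        obtain ⟨f, hdf, hcf⟩ := hcc
        refine ⟨f, ?_, hcf⟩
        by_cases hf0 : f = 0
        · simp only [hf0, Polynomial.natDegree_zero]
          exact hk
        · exact (Polynomial.natDegree_lt_iff_degree_lt hf0).mpr hdf
      obtain ⟨f₁, hdf₁, hcf₁⟩ := hf a
      obtain ⟨f₂, hdf₂, hcf₂⟩ := hf b
      obtain ⟨f₃, hdf₃, hcf₃⟩ := hf c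
      have hfne : ∀ (s t : S) (fs ft : Polynomial F),
          (s : Fin n → F) = (fun i => fs.eval (α i)) →
          (t : Fin n → F) = (fun i => ft.eval (α i)) → s ≠ t → fs ≠ ft := by
        intro s t fs ft hs ht hst hEq
        exact hst (Subtype.ext (by rw [hs, ht, hEq]))
      have h12 := hfne a b f₁ f₂ hcf₁ hcf₂ hab
      have h23 := hfne b c f₂ f₃ hcf₂ hcf₃ hbc
      have h13 := hfne a c f₁ f₃ hcf₁ hcf₃ hac
      -- distance bound in ℕ
      have hnR : (0:ℝ) < (n:ℝ) := by
        have : 0 < n := by omega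
        exact_mod_cast this
      have hdistN : ∀ s : S, 3 * hammingDist y (s : Fin n → F) ≤ 2 * (n - k) := by
        intro s
        have h := s.2.2
        have hval : ((2:ℝ)/3) * (1 - (k:ℝ)/n) * n = (2 * ((n:ℝ) - k)) / 3 := by
          field_simp
        have h' : ((3 * hammingDist y (s:Fin n → F) : ℕ) : ℝ)
            ≤ ((2 * (n - k) : ℕ) : ℝ) := by
          push_cast [Nat.cast_sub hkn.le]
          linarith
        exact_mod_cast h'
      -- agreement sets
      set A₁ := univ.filter (fun w => y w = f₁.eval (α w)) with hA₁
      set A₂ := univ.filter (fun w => y w = f₂.eval (α w)) with hA₂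
      set A₃ := univ.filter (fun w => y w = f₃.eval (α w)) with hA₃
      have hcardA : ∀ (s : S) (f : Polynomial F),
          ((s : Fin n → F) = fun i => f.eval (α i)) →
          (univ.filter (fun w => y w = f.eval (α w))).card
            + hammingDist y (s : Fin n → F) = n := by
        intro s f hs
        have hdd : hammingDist y (s : Fin n → F)
            = (univ.filter (fun w => ¬ (y w = f.eval (α w)))).card := by
          rw [hammingDist, hs]
        rw [hdd, Finset.card_filter_add_card_filter_not]
        simp
      have hA₁n := hcardA a f₁ hcf₁
      have hA₂n := hcardA b f₂ hcf₂
      have hA₃n := hcardA c f₃ hcf₃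
      rw [← hA₁] at hA₁n
      rw [← hA₂] at hA₂n
      rw [← hA₃] at hA₃n
      have hd₁ := hdistN a
      have hd₂ := hdistN b
      have hd₃ := hdistN c
      have hsumA : n + 2*k ≤ A₁.card + A₂.card + A₃.card := by omega
      -- inclusion-exclusion
      have i1 : (A₁ ∪ A₂).card + (A₁ ∩ A₂).card = A₁.card + A₂.card :=
        Finset.card_union_add_card_inter _ _
      have i2 : ((A₁ ∪ A₂) ∪ A₃).card + ((A₁ ∪ A₂) ∩ A₃).card
          = (A₁ ∪ A₂).card + A₃.card := Finset.card_union_add_card_inter _ _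
      have i3 : (A₁ ∪ A₂) ∩ A₃ = (A₁ ∩ A₃) ∪ (A₂ ∩ A₃) :=
        Finset.union_inter_distrib_right _ _ _
      have i4 : ((A₁ ∩ A₃) ∪ (A₂ ∩ A₃)).card + ((A₁ ∩ A₃) ∩ (A₂ ∩ A₃)).card
          = (A₁ ∩ A₃).card + (A₂ ∩ A₃).card := Finset.card_union_add_card_inter _ _
      have i5 : (A₁ ∩ A₃) ∩ (A₂ ∩ A₃) = A₁ ∩ A₂ ∩ A₃ := by
        ext w
        simp only [Finset.mem_inter]
        tauto
      have i6 : ((A₁ ∪ A₂) ∪ A₃).card ≤ n := by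
        refine le_trans (Finset.card_le_univ _) ?_
        simp
      rw [i3] at i2
      rw [i5] at i4
      -- intersection bounds
      have hb : ∀ (fa fb : Polynomial F) (Aa Ab : Finset (Fin n)), fa ≠ fb →
          fa.natDegree < k → fb.natDegree < k →
          (∀ w ∈ Aa, y w = fa.eval (α w)) → (∀ w ∈ Ab, y w = fb.eval (α w)) →
          (Aa ∩ Ab).card < k := by
        intro fa fb Aa Ab hne hda hdb ha hb'
        by_contra hge
        push_neg at hge
        apply hne
        have hz : fa - fb = 0 := by
          apply Polynomial.eq_zero_of_natDegree_lt_card_of_eval_eq_zero' _ ((Aa ∩ Ab).image α)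
          · intro x hx
            obtain ⟨w, hw, rfl⟩ := Finset.mem_image.mp hx
            have hwa := ha w (Finset.mem_inter.mp hw).1
            have hwb := hb' w (Finset.mem_inter.mp hw).2
            rw [Polynomial.eval_sub, ← hwa, ← hwb]
            ring
          · rw [Finset.card_image_of_injective _ hαinj]
            have : (fa - fb).natDegree < k :=
              lt_of_le_of_lt (Polynomial.natDegree_sub_le _ _) (max_lt hda hdb)
            omega
        exact sub_eq_zero.mp hz
      have hmem₁ : ∀ w ∈ A₁, y w = f₁.eval (α w) := fun w hw => (Finset.mem_filter.mp hw).2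
      have hmem₂ : ∀ w ∈ A₂, y w = f₂.eval (α w) := fun w hw => (Finset.mem_filter.mp hw).2
      have hmem₃ : ∀ w ∈ A₃, y w = f₃.eval (α w) := fun w hw => (Finset.mem_filter.mp hw).2
      have hb₁ := hb f₁ f₂ A₁ A₂ h12 hdf₁ hdf₂ hmem₁ hmem₂
      have hb₂ := hb f₂ f₃ A₂ A₃ h23 hdf₂ hdf₃ hmem₂ hmem₃
      have hb₃ := hb f₁ f₃ A₁ A₃ h13 hdf₁ hdf₃ hmem₁ hmem₃
      have hsumB : 2 * k + (A₁ ∩ A₂ ∩ A₃).card ≤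
          (A₁ ∩ A₂).card + (A₂ ∩ A₃).card + (A₁ ∩ A₃).card := by omega
      have hPvalid : Valid (A₁, A₂, A₃) := ⟨hb₁, hb₂, hb₃, hsumB⟩
      apply Finset.mem_biUnion.mpr
      refine ⟨(A₁, A₂, A₃), ?_, ?_⟩
      · rw [hPats]
        exact Finset.mem_filter.mpr ⟨Finset.mem_univ _, hPvalid⟩
      · simp only [Finset.mem_filter, Finset.mem_univ, true_and]
        apply (hD (A₁, A₂, A₃) hPvalid).2.2 α hαinj f₁ f₂ f₃ hdf₁ hdf₂ hdf₃ h12 h23 h13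
        · intro w hw
          rw [← hmem₁ w (Finset.mem_inter.mp hw).1, ← hmem₂ w (Finset.mem_inter.mp hw).2]
        · intro w hw
          rw [← hmem₂ w (Finset.mem_inter.mp hw).1, ← hmem₃ w (Finset.mem_inter.mp hw).2]
        · intro w hw
          rw [← hmem₁ w (Finset.mem_inter.mp hw).1, ← hmem₃ w (Finset.mem_inter.mp hw).2]
    refine le_trans (Finset.card_le_card hsub) (le_trans Finset.card_biUnion_le ?_)
    have hper : ∀ P ∈ Pats,
        (univ.filter (fun α : Fin n → F => MvPolynomial.eval α (D P) = 0)).card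
          ≤ k * k * q ^ (n - 1) := by
      intro P hP
      have hPv : Valid P := (Finset.mem_filter.mp hP).2
      obtain ⟨hne0, hdeg, _⟩ := hD P hPv
      refine le_trans (sz_card hn1 _ hne0) ?_
      exact Nat.mul_le_mul_right _ hdeg
    refine le_trans (Finset.sum_le_card_nsmul _ _ _ hper) ?_
    rw [smul_eq_mul]
    have hPc : Pats.card ≤ 2 ^ (3 * n) := by
      refine le_trans (Finset.card_filter_le _ _) ?_
      rw [Finset.card_univ]
      simp only [Fintype.card_prod, Fintype.card_finset, Fintype.card_fin]
      rw [← pow_add, ← pow_add]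
      apply Nat.pow_le_pow_right (by norm_num)
      omega
    calc Pats.card * (k * k * q ^ (n-1)) ≤ 2 ^ (3*n) * (k * k * q ^ (n-1)) :=
        Nat.mul_le_mul_right _ hPc
      _ = 2 ^ (3*n) * k ^ 2 * q ^ (n-1) := by ring
  calc (univ.filter (fun α : Fin n → F => ¬ (Function.Injective α ∧ LD α))).card
      ≤ _ := Finset.card_le_card hsplit
    _ ≤ (univ.filter (fun α : Fin n → F => ¬ Function.Injective α)).card
        + (univ.filter (fun α : Fin n → F => Function.Injective α ∧ ¬ LD α)).card :=
        Finset.card_union_le _ _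
    _ ≤ n ^ 2 * q ^ (n - 1) + 2 ^ (3 * n) * k ^ 2 * q ^ (n - 1) := Nat.add_le_add hNI hBLD
    _ = (2 ^ (3 * n) * k ^ 2 + n ^ 2) * q ^ (n - 1) := by ring
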